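/- Let n ≥ 2, k ≥ 1, and P = (Z/2^kZ)^n. Then SpecR(P) = {2^i : 0 ≤ i ≤ nk}. -/

import Mathlib

/-- The Reidemeister number of an (additive) endomorphism `φ`: the number of
`φ`-twisted conjugacy classes, where `x` and `y` are `φ`-conjugate iff
`x = z + y - φ z` for some `z`. -/
noncomputable def twistedClasses {A : Type*} [AddCommGroup A] (φ : A →+ A) : ℕ :=
  Nat.card (Quot (fun x y : A => ∃ z : A, x = z + y - φ z))

/-- The Reidemeister spectrum: the set of Reidemeister numbers of automorphisms. -/
noncomputable def reidSpec (A : Type*) [AddCommGroup A] : Set ℕ :=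
  {r | ∃ φ : A ≃+ A, twistedClasses φ.toAddMonoidHom = r}



lemma twistedClasses_eq_card_ker {A : Type*} [AddCommGroup A] [Finite A] (φ : A →+ A) :
    twistedClasses φ = Nat.card ((AddMonoidHom.id A - φ).ker) := by
  classical
  set ψ := AddMonoidHom.id A - φ with hψ
  have hψapp : ∀ z : A, ψ z = z - φ z := by
    intro z; simp [hψ]
  have hrel : ∀ x y : A, (∃ z : A, x = z + y - φ z) ↔ (QuotientAddGroup.leftRel ψ.range) x y := by
    intro x y
    rw [QuotientAddGroup.leftRel_apply]
    constructor
    · rintro ⟨z, rfl⟩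
      exact ⟨-z, by rw [hψapp, map_neg]; abel⟩
    · rintro ⟨z, hz⟩
      rw [hψapp] at hz
      refine ⟨-z, ?_⟩
      have hy : y = z - φ z + x := by rw [hz]; abel
      rw [map_neg, hy]; abel
  have e1 : Quot (fun x y : A => ∃ z : A, x = z + y - φ z) ≃ (A ⧸ ψ.range) :=
    Quot.congrRight hrel
  have h1 : Nat.card A = Nat.card (A ⧸ ψ.range) * Nat.card ψ.range :=
    AddSubgroup.card_eq_card_quotient_mul_card_addSubgroup _
  have h2 : Nat.card (A ⧸ ψ.ker) = Nat.card ψ.range :=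
    Nat.card_congr (QuotientAddGroup.quotientKerEquivRange ψ).toEquiv
  have h3 : Nat.card A = Nat.card (A ⧸ ψ.ker) * Nat.card ψ.ker :=
    AddSubgroup.card_eq_card_quotient_mul_card_addSubgroup _
  have hpos : 0 < Nat.card ψ.range := Nat.card_pos
  have : Nat.card (A ⧸ ψ.range) * Nat.card ψ.range = Nat.card ψ.ker * Nat.card ψ.range := by
    rw [← h1, h3, h2]; ring
  have hcard : Nat.card (A ⧸ ψ.range) = Nat.card ψ.ker :=
    Nat.eq_of_mul_eq_mul_right hpos this
  rw [twistedClasses, Nat.card_congr e1, hcard]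


lemma card_two_pow_torsion (k c : ℕ) (hc : c ≤ k) :
    Nat.card {s : ZMod (2 ^ k) // (2 : ZMod (2 ^ k)) ^ c * s = 0} = 2 ^ c := by
  haveI : NeZero (2 ^ k) := ⟨pow_ne_zero k two_ne_zero⟩
  have key : ∀ t : Fin (2 ^ c), ((2 ^ (k - c) * (t : ℕ) : ℕ) : ZMod (2 ^ k)) ∈
      {s : ZMod (2 ^ k) | (2 : ZMod (2 ^ k)) ^ c * s = 0} := by
    intro t
    show (2 : ZMod (2 ^ k)) ^ c * _ = 0
    have : ((2 ^ c * (2 ^ (k - c) * (t : ℕ)) : ℕ) : ZMod (2 ^ k)) = 0 := by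
      rw [← mul_assoc, ← pow_add, Nat.add_sub_cancel' hc]
      rw [Nat.cast_mul, ZMod.natCast_self, zero_mul]
    push_cast at this ⊢
    linear_combination this
  have e : Fin (2 ^ c) ≃ {s : ZMod (2 ^ k) // (2 : ZMod (2 ^ k)) ^ c * s = 0} := by
    refine Equiv.ofBijective (fun t => ⟨((2 ^ (k - c) * (t : ℕ) : ℕ) : ZMod (2 ^ k)), key t⟩) ⟨?_, ?_⟩
    · intro t₁ t₂ h
      have h' : ((2 ^ (k - c) * (t₁ : ℕ) : ℕ) : ZMod (2 ^ k)) = ((2 ^ (k - c) * (t₂ : ℕ) : ℕ) : ZMod (2 ^ k)) := by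
        simpa using congrArg Subtype.val h
      have lt : ∀ t : Fin (2 ^ c), 2 ^ (k - c) * (t : ℕ) < 2 ^ k := by
        intro t
        calc 2 ^ (k - c) * (t : ℕ) < 2 ^ (k - c) * 2 ^ c :=
          (Nat.mul_lt_mul_left (Nat.pow_pos two_pos)).mpr t.2
        _ = 2 ^ k := by rw [← pow_add, Nat.sub_add_cancel hc]
      have := congrArg ZMod.val h'
      rw [ZMod.val_cast_of_lt (lt t₁), ZMod.val_cast_of_lt (lt t₂)] at this
      exact Fin.ext (Nat.eq_of_mul_eq_mul_left (Nat.pow_pos two_pos) this)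
    · rintro ⟨s, hs⟩
      have hv : ((2 ^ c * s.val : ℕ) : ZMod (2 ^ k)) = 0 := by
        push_cast
        rw [ZMod.natCast_val, ZMod.cast_id]
        exact hs
      rw [ZMod.natCast_eq_zero_iff] at hv
      have hdvd : 2 ^ (k - c) ∣ s.val := by
        have h2 : 2 ^ c * 2 ^ (k - c) ∣ 2 ^ c * s.val := by
          rwa [← pow_add, Nat.add_sub_cancel' hc]
        exact (mul_dvd_mul_iff_left (a := (2:ℕ) ^ c) (pow_ne_zero _ two_ne_zero)).mp h2
      obtain ⟨t, ht⟩ := hdvd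
      have htlt : t < 2 ^ c := by
        by_contra hle
        push_neg at hle
        have : 2 ^ k ≤ s.val := by
          calc 2 ^ k = 2 ^ (k - c) * 2 ^ c := by rw [← pow_add, Nat.sub_add_cancel hc]
          _ ≤ 2 ^ (k - c) * t := Nat.mul_le_mul_left _ hle
          _ = s.val := ht.symm
        exact absurd (ZMod.val_lt s) (not_lt.mpr this)
      refine ⟨⟨t, htlt⟩, ?_⟩
      apply Subtype.ext
      show ((2 ^ (k - c) * t : ℕ) : ZMod (2 ^ k)) = s
      rw [← ht, ZMod.natCast_val, ZMod.cast_id]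
  rw [← Nat.card_congr e, Nat.card_eq_fintype_card, Fintype.card_fin]


lemma exists_good_auto (n k m c : ℕ) (hk : 1 ≤ k) (hn : 0 < n) (hm : 1 ≤ m) (hmn : m ≤ n)
    (hc : c ≤ k) (hinv : 2 ≤ m ∨ 1 ≤ c) :
    ∃ φ : (∀ _ : Fin n, ZMod (2 ^ k)) ≃+ (∀ _ : Fin n, ZMod (2 ^ k)),
      Nat.card ((AddMonoidHom.id (∀ _ : Fin n, ZMod (2 ^ k)) - φ.toAddMonoidHom).ker)
        = 2 ^ (c + (n - m) * k) := by
  haveI : NeZero (2 ^ k) := ⟨pow_ne_zero k two_ne_zero⟩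
  set R := ZMod (2 ^ k) with hR
  -- the underlying map
  set f : (Fin n → R) → (Fin n → R) := fun x j =>
    if h : (j : ℕ) + 1 < m then x ⟨(j : ℕ) + 1, by omega⟩
    else if (j : ℕ) + 1 = m then
      x ⟨0, hn⟩ - 2 ^ c * x ⟨1 % m, Nat.lt_of_lt_of_le (Nat.mod_lt 1 hm) hmn⟩
    else x j with hf
  have hf1 : ∀ (x : Fin n → R) (j : Fin n) (h : (j : ℕ) + 1 < m),
      f x j = x ⟨(j : ℕ) + 1, by omega⟩ := by
    intro x j h; simp only [hf]; rw [dif_pos h]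
  have hf2 : ∀ (x : Fin n → R) (j : Fin n) (h : (j : ℕ) + 1 = m),
      f x j = x ⟨0, hn⟩ - 2 ^ c * x ⟨1 % m, Nat.lt_of_lt_of_le (Nat.mod_lt 1 hm) hmn⟩ := by
    intro x j h; simp only [hf]; rw [dif_neg (by omega), if_pos h]
  have hf3 : ∀ (x : Fin n → R) (j : Fin n) (h : m ≤ (j : ℕ)), f x j = x j := by
    intro x j h; simp only [hf]; rw [dif_neg (by omega), if_neg (by omega)]
  have hadd : ∀ x y, f (x + y) = f x + f y := by
    intro x y; funext j
    simp only [hf, Pi.add_apply]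
    split_ifs <;> ring
  set F : (∀ _ : Fin n, R) →+ (∀ _ : Fin n, R) := AddMonoidHom.mk' f hadd with hF
  have hFapp : ∀ x, F x = f x := fun _ => rfl
  -- the unit
  have h2k : (2 : R) ^ k = 0 := by
    have : ((2 ^ k : ℕ) : R) = 0 := ZMod.natCast_self _
    push_cast at this; exact this
  have hunit : 1 ≤ c → IsUnit (1 - (2 : R) ^ c) := by
    intro hc1
    refine IsUnit.of_mul_eq_one (∑ t ∈ Finset.range k, ((2 : R) ^ c) ^ t) ?_
    have hg := geom_sum_mul ((2 : R) ^ c) k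
    have hck : ((2 : R) ^ c) ^ k = 0 := by
      rw [← pow_mul]
      have hle : k ≤ c * k := Nat.le_mul_of_pos_left k (by omega)
      rw [show c * k = k + (c * k - k) by omega, pow_add, h2k, zero_mul]
    calc (1 - (2 : R) ^ c) * ∑ t ∈ Finset.range k, ((2 : R) ^ c) ^ t
        = -((∑ t ∈ Finset.range k, ((2 : R) ^ c) ^ t) * ((2 : R) ^ c - 1)) := by ring
      _ = -(((2 : R) ^ c) ^ k - 1) := by rw [hg]
      _ = 1 := by rw [hck]; ring
  -- injectivity
  have hinj : Function.Injective F := by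
    rw [injective_iff_map_eq_zero]
    intro x hx
    have E : ∀ j : Fin n, f x j = 0 := fun j => congrFun hx j
    have hge : ∀ (l : ℕ) (h : l < n), m ≤ l → x ⟨l, h⟩ = 0 := by
      intro l h hl
      have := E ⟨l, h⟩; rwa [hf3 x ⟨l, h⟩ hl] at this
    have hmid : ∀ (l : ℕ) (h : l < n), 1 ≤ l → l < m → x ⟨l, h⟩ = 0 := by
      intro l h h1 h2
      have hj : l - 1 < n := by omega
      have := E ⟨l - 1, hj⟩
      rw [hf1 x ⟨l - 1, hj⟩ (by simp; omega)] at this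
      have heq : (⟨(l - 1 : ℕ) + 1, by omega⟩ : Fin n) = ⟨l, h⟩ := Fin.ext (by simp; omega)
      rwa [heq] at this
    have h0 : x ⟨0, hn⟩ = 0 := by
      have hj : m - 1 < n := by omega
      have := E ⟨m - 1, hj⟩
      rw [hf2 x ⟨m - 1, hj⟩ (by simp; omega)] at this
      rcases Nat.lt_or_ge m 2 with hm2 | hm2
      · -- m = 1
        have hm1 : m = 1 := by omega
        have heq : (⟨1 % m, Nat.lt_of_lt_of_le (Nat.mod_lt 1 hm) hmn⟩ : Fin n) = ⟨0, hn⟩ :=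
          Fin.ext (by simp [hm1])
        rw [heq] at this
        have hu := hunit (by omega)
        have : (1 - (2 : R) ^ c) * x ⟨0, hn⟩ = (1 - (2 : R) ^ c) * 0 := by
          rw [mul_zero]; linear_combination this
        exact hu.mul_left_cancel this
      · -- m ≥ 2
        have heq : (⟨1 % m, Nat.lt_of_lt_of_le (Nat.mod_lt 1 hm) hmn⟩ : Fin n) =
            ⟨1, by omega⟩ := Fin.ext (by simp [Nat.mod_eq_of_lt hm2])
        rw [heq, hmid 1 (by omega) le_rfl (by omega)] at this
        simpa using this
    funext j
    rcases Nat.lt_or_ge (j : ℕ) m with hj | hj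
    · rcases Nat.eq_zero_or_pos (j : ℕ) with h0' | h1
      · have : j = ⟨0, hn⟩ := Fin.ext h0'
        rw [this]; exact h0
      · have : x ⟨(j : ℕ), j.2⟩ = 0 := hmid (j : ℕ) j.2 h1 hj
        simpa using this
    · have : x ⟨(j : ℕ), j.2⟩ = 0 := hge (j : ℕ) j.2 hj
      simpa using this
  haveI : Finite (∀ _ : Fin n, R) := by infer_instance
  have hbij : Function.Bijective F := ⟨hinj, Finite.surjective_of_injective hinj⟩
  refine ⟨AddEquiv.ofBijective F hbij, ?_⟩
  have hcoe : (AddEquiv.ofBijective F hbij).toAddMonoidHom = F := rfl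
  rw [hcoe]
  -- kernel membership
  have hker : ∀ x : ∀ _ : Fin n, R,
      x ∈ (AddMonoidHom.id (∀ _ : Fin n, R) - F).ker ↔ f x = x := by
    intro x
    rw [AddMonoidHom.mem_ker, AddMonoidHom.sub_apply, AddMonoidHom.id_apply, sub_eq_zero,
      hFapp, eq_comm]
  -- fixed point structure
  have fix_eq : ∀ x : Fin n → R, f x = x → ∀ (l : ℕ) (h : l < n), l < m →
      x ⟨l, h⟩ = x ⟨0, hn⟩ := by
    intro x hx l
    induction l with
    | zero => intro h _; rfl
    | succ p ih =>
      intro h hlm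
      have hp : p < n := by omega
      have := congrFun hx ⟨p, hp⟩
      rw [hf1 x ⟨p, hp⟩ (by simpa using hlm)] at this
      exact this.trans (ih hp (by omega))
  have fix_tor : ∀ x : Fin n → R, f x = x → (2 : R) ^ c * x ⟨0, hn⟩ = 0 := by
    intro x hx
    have hj : m - 1 < n := by omega
    have := congrFun hx ⟨m - 1, hj⟩
    rw [hf2 x ⟨m - 1, hj⟩ (by simp; omega)] at this
    rw [fix_eq x hx (1 % m) _ (Nat.mod_lt 1 hm), fix_eq x hx (m - 1) hj (by omega)] at this
    exact sub_eq_self.mp this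
  -- the equivalence
  set T := ({s : R // (2 : R) ^ c * s = 0} × ({j : Fin n // m ≤ (j : ℕ)} → R)) with hT
  set g : T → (Fin n → R) := fun p j =>
    if h : (j : ℕ) < m then p.1.1 else p.2 ⟨j, le_of_not_gt h⟩ with hgdef
  have hg1 : ∀ (p : T) (j : Fin n), (j : ℕ) < m → g p j = p.1.1 := by
    intro p j h; simp only [hgdef]; rw [dif_pos h]
  have hg2 : ∀ (p : T) (j : Fin n) (h : m ≤ (j : ℕ)), g p j = p.2 ⟨j, h⟩ := by
    intro p j h; simp only [hgdef]; rw [dif_neg (not_lt.mpr h)]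
  have hfix_g : ∀ p : T, f (g p) = g p := by
    intro p
    funext j
    rcases Nat.lt_or_ge ((j : ℕ) + 1) m with hj | hj
    · rw [hf1 (g p) j hj, hg1 p _ (show ((⟨(j : ℕ) + 1, by omega⟩ : Fin n) : ℕ) < m from hj),
        hg1 p j (by omega)]
    · rcases Nat.eq_or_lt_of_le hj with hj2 | hj2
      · rw [hf2 (g p) j hj2.symm,
          hg1 p ⟨0, hn⟩ (show (0 : ℕ) < m by omega),
          hg1 p ⟨1 % m, Nat.lt_of_lt_of_le (Nat.mod_lt 1 hm) hmn⟩ (Nat.mod_lt 1 hm),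
          hg1 p j (by omega), p.1.2, sub_zero]
      · rw [hf3 (g p) j (by omega)]
  set t : ((AddMonoidHom.id (∀ _ : Fin n, R) - F).ker) → T := fun x =>
    (⟨x.1 ⟨0, hn⟩, fix_tor x.1 ((hker x.1).mp x.2)⟩, fun j => x.1 j.1) with htdef
  set u : T → ((AddMonoidHom.id (∀ _ : Fin n, R) - F).ker) := fun p =>
    ⟨g p, (hker (g p)).mpr (hfix_g p)⟩ with hudef
  have e : ((AddMonoidHom.id (∀ _ : Fin n, R) - F).ker) ≃ T := by
    refine { toFun := t, invFun := u, left_inv := ?_, right_inv := ?_ }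
    · intro x
      apply Subtype.ext
      show g (t x) = x.1
      funext j
      rcases Nat.lt_or_ge (j : ℕ) m with h | h
      · rw [hg1 (t x) j h]
        exact (fix_eq x.1 ((hker x.1).mp x.2) (j : ℕ) j.2 h).symm
      · rw [hg2 (t x) j h]
    · intro p
      refine Prod.ext ?_ ?_
      · apply Subtype.ext
        show g p ⟨0, hn⟩ = p.1.1
        exact hg1 p ⟨0, hn⟩ (show (0 : ℕ) < m by omega)
      · funext j
        show g p j.1 = p.2 j
        exact hg2 p j.1 j.2
  rw [Nat.card_congr e, hT, Nat.card_prod]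
  have c1 : Nat.card {s : R // (2 : R) ^ c * s = 0} = 2 ^ c :=
    card_two_pow_torsion k c hc
  have eidx : {j : Fin n // m ≤ (j : ℕ)} ≃ Fin (n - m) := by
    refine
      { toFun := fun j => ⟨(j : ℕ) - m, by have := j.1.2; have := j.2; omega⟩
        invFun := fun t => ⟨⟨m + (t : ℕ), by have := t.2; omega⟩, by simp⟩
        left_inv := ?_
        right_inv := ?_ }
    · intro j; apply Subtype.ext; apply Fin.ext; have := j.2; simp; omega
    · intro t; apply Fin.ext; simp
  have c2 : Nat.card ({j : Fin n // m ≤ (j : ℕ)} → R) = 2 ^ ((n - m) * k) := by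
    rw [Nat.card_fun, Nat.card_congr eidx, Nat.card_zmod, Nat.card_eq_fintype_card,
      Fintype.card_fin, ← pow_mul, mul_comm]
  rw [c1, c2, ← pow_add]

theorem stmt_18 (n k : ℕ) (hn : 2 ≤ n) (hk : 1 ≤ k) :
    reidSpec (∀ _ : Fin n, ZMod (2 ^ k)) = {r | ∃ i, i ≤ n * k ∧ r = 2 ^ i} := by
  haveI : NeZero (2 ^ k) := ⟨pow_ne_zero k two_ne_zero⟩
  haveI : Finite (∀ _ : Fin n, ZMod (2 ^ k)) := inferInstance
  have hcardA : Nat.card (∀ _ : Fin n, ZMod (2 ^ k)) = 2 ^ (n * k) := by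
    rw [Nat.card_fun, Nat.card_zmod, Nat.card_eq_fintype_card, Fintype.card_fin, ← pow_mul,
      mul_comm]
  ext r
  simp only [reidSpec, Set.mem_setOf_eq]
  constructor
  · rintro ⟨φ, rfl⟩
    rw [twistedClasses_eq_card_ker]
    have hdvd : Nat.card ((AddMonoidHom.id (∀ _ : Fin n, ZMod (2 ^ k))
        - φ.toAddMonoidHom).ker) ∣ 2 ^ (n * k) := by
      rw [← hcardA]; exact AddSubgroup.card_addSubgroup_dvd_card _
    obtain ⟨i, hi, hieq⟩ := (Nat.dvd_prime_pow Nat.prime_two).mp hdvd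
    exact ⟨i, hi, hieq⟩
  · rintro ⟨i, hi, rfl⟩
    by_cases h0 : i = 0
    · obtain ⟨φ, hφ⟩ := exists_good_auto n k n 0 hk (by omega) (by omega) le_rfl (by omega)
        (Or.inl hn)
      refine ⟨φ, ?_⟩
      rw [twistedClasses_eq_card_ker, hφ, h0]
      simp
    · obtain ⟨q, cc, hcc1, hcck, hqn, hsum⟩ :
          ∃ q cc, 1 ≤ cc ∧ cc ≤ k ∧ q < n ∧ cc + q * k = i := by
        refine ⟨(i - 1) / k, i - (i - 1) / k * k, ?_, ?_, ?_, ?_⟩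
        · have h1 : (i - 1) / k * k ≤ i - 1 := Nat.div_mul_le_self _ _
          omega
        · have h2 := Nat.div_add_mod (i - 1) k
          have h3 : (i - 1) % k < k := Nat.mod_lt _ (by omega)
          have h4 : k * ((i - 1) / k) = (i - 1) / k * k := mul_comm _ _
          omega
        · by_contra hq'
          push_neg at hq'
          have h5 : n * k ≤ (i - 1) / k * k := Nat.mul_le_mul_right k hq'
          have h1 : (i - 1) / k * k ≤ i - 1 := Nat.div_mul_le_self _ _
          omega
        · have h1 : (i - 1) / k * k ≤ i - 1 := Nat.div_mul_le_self _ _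
          omega
      obtain ⟨φ, hφ⟩ := exists_good_auto n k (n - q) cc hk (by omega) (by omega) (by omega)
        hcck (Or.inr hcc1)
      refine ⟨φ, ?_⟩
      rw [twistedClasses_eq_card_ker, hφ]
      congr 1
      have h1 : n - (n - q) = q := by omega
      rw [h1]
      omega
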